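/- For λ ∈ ℂ, there exists a nonzero bounded sequence v = (v(n))_{n≥0} with Σ_m s(n,m) v(m) = λ v(n) for every n ≥ 0 if and only if λ ∈ E. In other words, the point spectrum of the transition operator S acting on l^∞ equals the fibered filled Julia set E. -/

import Mathlib

open Filter Finset
open scoped ENNReal Topology ZeroAtInfty

noncomputable section

namespace AMFC

/-- `q d j = d 0 * d 1 * ... * d j`. -/
def q (d : ℕ → ℕ) (j : ℕ) : ℕ := ∏ i ∈ Finset.range (j + 1), d i

/-- For `j ≥ 1`, `digit d n j = ⌊n / q_{j-1}⌋ mod d_j` is the `j`-th digit of `n`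
in the Cantor system of numeration. -/
def digit (d : ℕ → ℕ) (n j : ℕ) : ℕ := (n / q d (j - 1)) % d j

/-- The counter `ζ_n = min { j ≥ 1 : a_j(n) ≠ d_j - 1 }`. -/
def zeta (d : ℕ → ℕ) (n : ℕ) : ℕ := sInf {j | 1 ≤ j ∧ digit d n j ≠ d j - 1}

open scoped Classical in
/-- The transition probabilities of the stochastic adding machine. -/
def s (d : ℕ → ℕ) (p : ℕ → ℝ) (n m : ℕ) : ℝ :=
  if m = n + 1 then ∏ j ∈ Finset.Icc 1 (zeta d n), p j
  else if m = n then 1 - p 1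
  else if h : ∃ r, 1 ≤ r ∧ r + 1 ≤ zeta d n ∧
      n = m + ∑ j ∈ Finset.Icc 1 r, (d j - 1) * q d (j - 1)
    then (1 - p (h.choose + 1)) * ∏ j ∈ Finset.Icc 1 h.choose, p j
  else 0

/-- `f j (z) = ((z - (1 - p j)) / p j) ^ (d j)`. -/
def f (d : ℕ → ℕ) (p : ℕ → ℝ) (j : ℕ) (z : ℂ) : ℂ :=
  ((z - (1 - (p j : ℂ))) / (p j : ℂ)) ^ d j

/-- `ftil j = f j ∘ ... ∘ f 1`, with `ftil 0 = id`. -/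
def ftil (d : ℕ → ℕ) (p : ℕ → ℝ) : ℕ → ℂ → ℂ
  | 0 => id
  | j + 1 => f d p (j + 1) ∘ ftil d p j

/-- The fibered filled Julia set `E = {z : limsup_j |ftil j z| < ∞}`. -/
def E (d : ℕ → ℕ) (p : ℕ → ℝ) : Set ℂ :=
  {z | Filter.limsup (fun j => (‖ftil d p j z‖₊ : ℝ≥0∞)) Filter.atTop < ⊤}

/-- `ι_λ(r) = (ftil (r-1) λ - (1 - p r)) / p r` for `r ≥ 1`. -/
def iota (d : ℕ → ℕ) (p : ℕ → ℝ) (lam : ℂ) (r : ℕ) : ℂ :=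
  (ftil d p (r - 1) lam - (1 - (p r : ℂ))) / (p r : ℂ)

/-- `v_λ(n) = ∏_{r ≥ 1} ι_λ(r) ^ a_r(n)`, a finite product. -/
def vlam (d : ℕ → ℕ) (p : ℕ → ℝ) (lam : ℂ) (n : ℕ) : ℂ :=
  ∏ᶠ r : ℕ, iota d p lam (r + 1) ^ digit d n (r + 1)

/-- The point spectrum of a continuous linear operator. -/
def pointSpectrum {M : Type*} [NormedAddCommGroup M] [NormedSpace ℂ M]
    (T : M →L[ℂ] M) : Set ℂ :=
  {lam | ∃ v, v ≠ 0 ∧ T v = lam • v}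

/-- The residual spectrum: `T - λI` is injective but its range is not dense. -/
def residualSpectrum {M : Type*} [NormedAddCommGroup M] [NormedSpace ℂ M]
    (T : M →L[ℂ] M) : Set ℂ :=
  {lam | Function.Injective ⇑(T - lam • (1 : M →L[ℂ] M)) ∧
    ¬ DenseRange ⇑(T - lam • (1 : M →L[ℂ] M))}

/-- The continuous spectrum: `T - λI` is injective with dense range, but not surjective. -/
def continuousSpectrum {M : Type*} [NormedAddCommGroup M] [NormedSpace ℂ M]
    (T : M →L[ℂ] M) : Set ℂ :=
  {lam | Function.Injective ⇑(T - lam • (1 : M →L[ℂ] M)) ∧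
    DenseRange ⇑(T - lam • (1 : M →L[ℂ] M)) ∧
    Set.range ⇑(T - lam • (1 : M →L[ℂ] M)) ≠ Set.univ}
section Lemmas

variable {d : ℕ → ℕ} {p : ℕ → ℝ}

lemma q_succ (j : ℕ) : q d (j + 1) = q d j * d (j + 1) := Finset.prod_range_succ d (j + 1)

lemma q_zero (hd0 : d 0 = 1) : q d 0 = 1 := by simp [q, hd0]

lemma q_pos (hd0 : d 0 = 1) (hd : ∀ j, 1 ≤ j → 2 ≤ d j) (j : ℕ) : 0 < q d j := by
  induction j with
  | zero => simp [q_zero hd0]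
  | succ k ih =>
    rw [q_succ]
    have := hd (k + 1) (by omega)
    exact Nat.mul_pos ih (by omega)

lemma q_dvd {i j : ℕ} (h : i ≤ j) : q d i ∣ q d j :=
  Finset.prod_dvd_prod_of_subset _ _ d (Finset.range_subset_range.2 (by omega))

lemma q_le (hd0 : d 0 = 1) (hd : ∀ j, 1 ≤ j → 2 ≤ d j) {i j : ℕ} (h : i ≤ j) :
    q d i ≤ q d j := Nat.le_of_dvd (q_pos hd0 hd j) (q_dvd h)

lemma q_ge (hd0 : d 0 = 1) (hd : ∀ j, 1 ≤ j → 2 ≤ d j) (j : ℕ) : j + 1 ≤ q d j := by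
  induction j with
  | zero => simp [q_zero hd0]
  | succ k ih =>
    rw [q_succ]
    have := hd (k + 1) (by omega)
    calc k + 1 + 1 ≤ q d k * 2 := by omega
    _ ≤ q d k * d (k + 1) := Nat.mul_le_mul_left _ (by omega)

lemma digit_lt (hd : ∀ j, 1 ≤ j → 2 ≤ d j) {j : ℕ} (hj : 1 ≤ j) (n : ℕ) :
    digit d n j < d j := Nat.mod_lt _ (by have := hd j hj; omega)

lemma digit_eq_zero {n r : ℕ} (h : n < q d r) : digit d n (r + 1) = 0 := by
  simp [digit, Nat.div_eq_of_lt h]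

lemma zeta_mem (hd0 : d 0 = 1) (hd : ∀ j, 1 ≤ j → 2 ≤ d j) (n : ℕ) :
    1 ≤ zeta d n ∧ digit d n (zeta d n) ≠ d (zeta d n) - 1 := by
  have hne : {j | 1 ≤ j ∧ digit d n j ≠ d j - 1}.Nonempty := by
    refine ⟨n + 1, by omega, ?_⟩
    rw [digit_eq_zero (by have := q_ge hd0 hd n; omega)]
    have := hd (n + 1) (by omega); omega
  exact Nat.sInf_mem hne

lemma zeta_pos (hd0 : d 0 = 1) (hd : ∀ j, 1 ≤ j → 2 ≤ d j) (n : ℕ) : 1 ≤ zeta d n :=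
  (zeta_mem hd0 hd n).1

lemma digit_of_lt_zeta {n j : ℕ} (hj : 1 ≤ j) (hjz : j < zeta d n) :
    digit d n j = d j - 1 := by
  have := Nat.notMem_of_lt_sInf (show j < sInf {j | 1 ≤ j ∧ digit d n j ≠ d j - 1} from hjz)
  simp only [Set.mem_setOf_eq, not_and, not_not] at this
  exact this hj

lemma mod_mul_eq {a : ℕ} (b n : ℕ) (ha : 0 < a) :
    n % (a * b) = n % a + (n / a % b) * a := by
  have h1 : n % (a * b) % a = n % a := Nat.mod_mod_of_dvd n ⟨b, rfl⟩
  have h2 : n % (a * b) / a = n / a % b := Nat.mod_mul_right_div_self n a b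
  have h3 := Nat.div_add_mod (n % (a * b)) a
  rw [h2, Nat.mul_comm a (n / a % b)] at h3
  omega

lemma sum_digits (hd0 : d 0 = 1) (hd : ∀ j, 1 ≤ j → 2 ≤ d j) (n r : ℕ) :
    ∑ j ∈ Icc 1 r, digit d n j * q d (j - 1) = n % q d r := by
  induction r with
  | zero => simp [q_zero hd0, Nat.mod_one]
  | succ k ih =>
    rw [Finset.sum_Icc_succ_top (by omega), ih, q_succ,
      mod_mul_eq (d (k + 1)) n (q_pos hd0 hd k)]
    simp [digit]

end Lemmas
section Lemmas2

variable {d : ℕ → ℕ} {p : ℕ → ℝ}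

/-- `Tt d r = ∑_{j=1}^r (d j - 1) q_{j-1}`. -/
def Tt (d : ℕ → ℕ) (r : ℕ) : ℕ := ∑ j ∈ Finset.Icc 1 r, (d j - 1) * q d (j - 1)

lemma Tt_succ (r : ℕ) : Tt d (r + 1) = Tt d r + (d (r + 1) - 1) * q d r := by
  simp [Tt, Finset.sum_Icc_succ_top (show 1 ≤ r + 1 by omega)]

lemma Tt_strictMono (hd0 : d 0 = 1) (hd : ∀ j, 1 ≤ j → 2 ≤ d j) :
    StrictMono (Tt d) := by
  apply strictMono_nat_of_lt_succ
  intro r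
  rw [Tt_succ]
  have h1 := q_pos hd0 hd r
  have h2 := hd (r + 1) (by omega)
  have : 1 * 1 ≤ (d (r + 1) - 1) * q d r := Nat.mul_le_mul (by omega) (by omega)
  omega

lemma Tt_pos (hd0 : d 0 = 1) (hd : ∀ j, 1 ≤ j → 2 ≤ d j) {r : ℕ} (hr : 1 ≤ r) :
    0 < Tt d r := by
  have := Tt_strictMono hd0 hd (show 0 < r from hr)
  simpa [Tt] using this

lemma Tt_add_one (hd0 : d 0 = 1) (hd : ∀ j, 1 ≤ j → 2 ≤ d j) (r : ℕ) :
    Tt d r + 1 = q d r := by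
  induction r with
  | zero => simp [Tt, q_zero hd0]
  | succ k ih =>
    rw [Tt_succ, q_succ]
    have h1 := q_pos hd0 hd k
    have h2 := hd (k + 1) (by omega)
    have h3 : d (k + 1) - 1 + 1 = d (k + 1) := by omega
    have h4 : (d (k + 1) - 1) * q d k + q d k = q d k * d (k + 1) := by
      calc (d (k + 1) - 1) * q d k + q d k = (d (k + 1) - 1 + 1) * q d k := by ring
      _ = q d k * d (k + 1) := by rw [h3]; ring
    omega

lemma Tt_eq_mod (hd0 : d 0 = 1) (hd : ∀ j, 1 ≤ j → 2 ≤ d j) {n r : ℕ}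
    (hr : r < zeta d n) : Tt d r = n % q d r := by
  rw [← sum_digits hd0 hd n r, Tt]
  refine Finset.sum_congr rfl fun j hj => ?_
  rw [Finset.mem_Icc] at hj
  rw [digit_of_lt_zeta hj.1 (by omega)]

lemma Tt_le (hd0 : d 0 = 1) (hd : ∀ j, 1 ≤ j → 2 ≤ d j) {n r : ℕ}
    (hr : r < zeta d n) : Tt d r ≤ n := by
  rw [Tt_eq_mod hd0 hd hr]; exact Nat.mod_le n _

/-- digits of `q d r * t` vanish in positions `1 ≤ j ≤ r`. -/
lemma digit_mul_eq_zero (hd0 : d 0 = 1) (hd : ∀ j, 1 ≤ j → 2 ≤ d j) {j r : ℕ}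
    (hj : 1 ≤ j) (hjr : j ≤ r) (t : ℕ) : digit d (q d r * t) j = 0 := by
  obtain ⟨u, hu⟩ := q_dvd (d := d) hjr
  have hj1 : j - 1 + 1 = j := by omega
  have hq : q d j = q d (j - 1) * d j := by
    conv_lhs => rw [← hj1, q_succ (j - 1), hj1]
  have : q d r * t = q d (j - 1) * (d j * (u * t)) := by rw [hu, hq]; ring
  rw [digit, this, Nat.mul_div_cancel_left _ (q_pos hd0 hd (j - 1)), Nat.mul_mod_right]

/-- div of `q d r * (n / q d r)` at level `j - 1 ≥ r` agrees with that of `n`. -/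
lemma div_mul_eq (hd0 : d 0 = 1) (hd : ∀ j, 1 ≤ j → 2 ≤ d j) {j r : ℕ}
    (hj : r + 1 ≤ j) (n : ℕ) :
    q d r * (n / q d r) / q d (j - 1) = n / q d (j - 1) := by
  obtain ⟨k, hk⟩ := q_dvd (d := d) (show r ≤ j - 1 by omega)
  rw [hk, Nat.mul_div_mul_left _ _ (q_pos hd0 hd r), Nat.div_div_eq_div_mul, ← hk]

lemma sub_Tt_eq (hd0 : d 0 = 1) (hd : ∀ j, 1 ≤ j → 2 ≤ d j) {n r : ℕ}
    (hr : r < zeta d n) : n - Tt d r = q d r * (n / q d r) := by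
  rw [Tt_eq_mod hd0 hd hr]
  have := Nat.div_add_mod n (q d r)
  omega

lemma digit_sub_le (hd0 : d 0 = 1) (hd : ∀ j, 1 ≤ j → 2 ≤ d j) {n r j : ℕ}
    (hr : r < zeta d n) (hj : 1 ≤ j) (hjr : j ≤ r) : digit d (n - Tt d r) j = 0 := by
  rw [sub_Tt_eq hd0 hd hr]; exact digit_mul_eq_zero hd0 hd hj hjr _

lemma digit_sub_gt (hd0 : d 0 = 1) (hd : ∀ j, 1 ≤ j → 2 ≤ d j) {n r j : ℕ}
    (hr : r < zeta d n) (hj : r + 1 ≤ j) : digit d (n - Tt d r) j = digit d n j := by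
  rw [sub_Tt_eq hd0 hd hr, digit, digit, div_mul_eq hd0 hd hj]

/-- `n + 1 = q_{ζ-1} * (n / q_{ζ-1} + 1)`. -/
lemma succ_eq (hd0 : d 0 = 1) (hd : ∀ j, 1 ≤ j → 2 ≤ d j) (n : ℕ) :
    n + 1 = q d (zeta d n - 1) * (n / q d (zeta d n - 1) + 1) := by
  set z := zeta d n with hz
  have hz1 : 1 ≤ z := zeta_pos hd0 hd n
  have h1 : Tt d (z - 1) = n % q d (z - 1) := Tt_eq_mod hd0 hd (by omega)
  have h2 : Tt d (z - 1) + 1 = q d (z - 1) := Tt_add_one hd0 hd (z - 1)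
  have h3 := Nat.div_add_mod n (q d (z - 1))
  have : q d (z - 1) * (n / q d (z - 1) + 1)
      = q d (z - 1) * (n / q d (z - 1)) + q d (z - 1) := by ring
  omega

lemma digit_succ_lt (hd0 : d 0 = 1) (hd : ∀ j, 1 ≤ j → 2 ≤ d j) {n j : ℕ}
    (hj : 1 ≤ j) (hjz : j < zeta d n) : digit d (n + 1) j = 0 := by
  rw [succ_eq hd0 hd n]
  exact digit_mul_eq_zero hd0 hd hj (by omega) _

lemma digit_zeta_lt (hd0 : d 0 = 1) (hd : ∀ j, 1 ≤ j → 2 ≤ d j) (n : ℕ) :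
    digit d n (zeta d n) + 2 ≤ d (zeta d n) := by
  have h1 := (zeta_mem hd0 hd n).2
  have h2 := digit_lt hd (zeta_pos hd0 hd n) n
  omega

lemma digit_succ_at (hd0 : d 0 = 1) (hd : ∀ j, 1 ≤ j → 2 ≤ d j) (n : ℕ) :
    digit d (n + 1) (zeta d n) = digit d n (zeta d n) + 1 := by
  set z := zeta d n with hz
  have hq := q_pos hd0 hd (z - 1)
  have hdiv : (n + 1) / q d (z - 1) = n / q d (z - 1) + 1 := by
    conv_lhs => rw [succ_eq hd0 hd n, ← hz]
    rw [Nat.mul_div_cancel_left _ hq]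
  have hlt := digit_zeta_lt hd0 hd n
  rw [← hz] at hlt
  rw [digit] at hlt ⊢
  rw [hdiv]
  have h2 : 2 ≤ d z := hd z (zeta_pos hd0 hd n)
  set a := n / q d (z - 1) with hadef
  have h1 : (a + 1) % d z = (a % d z + 1 % d z) % d z := Nat.add_mod a 1 (d z)
  have h3 : 1 % d z = 1 := Nat.mod_eq_of_lt (by omega)
  have h4 : (a % d z + 1) % d z = a % d z + 1 := Nat.mod_eq_of_lt (by omega)
  rw [h1, h3, h4, digit]

lemma mod_ne_of_dvd {a b m : ℕ} (h : a ∣ b) (ha : 1 ≤ a) (hb : a < b)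
    (hm : m % a ≠ a - 1) : m % b ≠ b - 1 := by
  intro hcontra
  apply hm
  have h1 : m % b % a = m % a := Nat.mod_mod_of_dvd m h
  obtain ⟨k, hk⟩ := h
  have hk1 : 2 ≤ k := by by_contra h'; push_neg at h'; interval_cases k <;> omega
  have e0 : (k - 1) * a + a = a * k := by
    have hkk : k - 1 + 1 = k := by omega
    calc (k - 1) * a + a = (k - 1 + 1) * a := by ring
    _ = a * k := by rw [hkk]; ring
  have e1 : b - 1 = (a - 1) + (k - 1) * a := by omega
  have e2 : (b - 1) % a = a - 1 := by
    rw [e1, Nat.add_mul_mod_self_right, Nat.mod_eq_of_lt (by omega)]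
  rw [← h1, hcontra, e2]

lemma mod_zeta_lt (hd0 : d 0 = 1) (hd : ∀ j, 1 ≤ j → 2 ≤ d j) (n : ℕ) :
    n % q d (zeta d n) < q d (zeta d n) - 1 := by
  set z := zeta d n with hz
  have hz1 : 1 ≤ z := zeta_pos hd0 hd n
  have hz' : z - 1 + 1 = z := by omega
  have h1 : n % q d z = Tt d (z - 1) + digit d n z * q d (z - 1) := by
    rw [← sum_digits hd0 hd n z]
    conv_lhs => rw [← hz', Finset.sum_Icc_succ_top (by omega), hz']
    rw [Tt]
    congr 1
    · exact Finset.sum_congr rfl fun j hj => by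
        rw [Finset.mem_Icc] at hj
        rw [digit_of_lt_zeta hj.1 (by omega)]
  have h2 : Tt d (z - 1) + 1 = q d (z - 1) := Tt_add_one hd0 hd (z - 1)
  have h3 : digit d n z + 2 ≤ d z := by
    have := digit_zeta_lt hd0 hd n
    rw [← hz] at this; exact this
  have h4 : q d z = q d (z - 1) * d z := by
    conv_lhs => rw [← hz', q_succ (z - 1), hz']
  have h5 : 1 ≤ q d (z - 1) := q_pos hd0 hd (z - 1)
  have h6 : (digit d n z + 1) * q d (z - 1) ≤ (d z - 1) * q d (z - 1) :=
    Nat.mul_le_mul_right _ (by omega)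
  have h7 : (d z - 1) * q d (z - 1) + q d (z - 1) = q d (z - 1) * d z := by
    have h3' : d z - 1 + 1 = d z := by omega
    calc (d z - 1) * q d (z - 1) + q d (z - 1) = (d z - 1 + 1) * q d (z - 1) := by ring
    _ = q d (z - 1) * d z := by rw [h3']; ring
  have h8 : (digit d n z + 1) * q d (z - 1)
      = digit d n z * q d (z - 1) + q d (z - 1) := by ring
  omega

lemma digit_succ_gt (hd0 : d 0 = 1) (hd : ∀ j, 1 ≤ j → 2 ≤ d j) {n j : ℕ}
    (hj : zeta d n < j) : digit d (n + 1) j = digit d n j := by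
  have hz1 : 1 ≤ zeta d n := zeta_pos hd0 hd n
  have hQpos := q_pos hd0 hd (j - 1)
  have hqz := q_pos hd0 hd (zeta d n)
  have hmodz := mod_zeta_lt hd0 hd n
  have hdvd : q d (zeta d n) ∣ q d (j - 1) := q_dvd (by omega)
  have hne : n % q d (j - 1) ≠ q d (j - 1) - 1 := by
    rcases Nat.eq_or_lt_of_le (show zeta d n ≤ j - 1 by omega) with he | hlt'
    · rw [← he]; omega
    · have hlt2 : q d (zeta d n) < q d (j - 1) := by
        have ha : q d (zeta d n) * 2 ≤ q d (zeta d n + 1) := by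
          rw [q_succ]
          exact Nat.mul_le_mul_left _ (hd _ (by omega))
        have hb : q d (zeta d n + 1) ≤ q d (j - 1) := q_le hd0 hd (by omega)
        omega
      exact mod_ne_of_dvd hdvd (by omega) hlt2 (by omega)
  have hmlt : n % q d (j - 1) < q d (j - 1) := Nat.mod_lt _ hQpos
  have hdiv : (n + 1) / q d (j - 1) = n / q d (j - 1) := by
    have h3 := Nat.div_add_mod n (q d (j - 1))
    have hsplit : n + 1 = q d (j - 1) * (n / q d (j - 1)) + (n % q d (j - 1) + 1) := by
      omega
    have hlt3 : n % q d (j - 1) + 1 < q d (j - 1) := by omega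
    rw [hsplit, Nat.mul_add_div hQpos, Nat.div_eq_of_lt hlt3, Nat.add_zero]
  rw [digit, digit, hdiv]

end Lemmas2
section Lemmas3

variable {d : ℕ → ℕ} {p : ℕ → ℝ}

lemma s_apply_succ (d : ℕ → ℕ) (p : ℕ → ℝ) (n : ℕ) :
    s d p n (n + 1) = ∏ j ∈ Finset.Icc 1 (zeta d n), p j := by
  rw [s, if_pos rfl]

lemma s_apply_self (d : ℕ → ℕ) (p : ℕ → ℝ) (n : ℕ) :
    s d p n n = 1 - p 1 := by
  rw [s, if_neg (by omega), if_pos rfl]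

lemma s_apply_sub (hd0 : d 0 = 1) (hd : ∀ j, 1 ≤ j → 2 ≤ d j) {n r : ℕ}
    (hr1 : 1 ≤ r) (hr2 : r + 1 ≤ zeta d n) :
    s d p n (n - Tt d r) = (1 - p (r + 1)) * ∏ j ∈ Finset.Icc 1 r, p j := by
  have hT0 : 0 < Tt d r := Tt_pos hd0 hd hr1
  have hTn : Tt d r ≤ n := Tt_le hd0 hd (by omega)
  rw [s, if_neg (by omega), if_neg (by omega)]
  have hex : ∃ r', 1 ≤ r' ∧ r' + 1 ≤ zeta d n ∧
      n = (n - Tt d r) + ∑ j ∈ Finset.Icc 1 r', (d j - 1) * q d (j - 1) :=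
    ⟨r, hr1, hr2, by rw [show (∑ j ∈ Finset.Icc 1 r, (d j - 1) * q d (j - 1)) = Tt d r from rfl]; omega⟩
  rw [dif_pos hex]
  have hc := hex.choose_spec
  have hTc : Tt d hex.choose = Tt d r := by
    have h := hc.2.2
    rw [show (∑ j ∈ Finset.Icc 1 hex.choose, (d j - 1) * q d (j - 1)) = Tt d hex.choose from rfl] at h
    omega
  rw [(Tt_strictMono hd0 hd).injective hTc]

lemma s_eq_zero (hd0 : d 0 = 1) (hd : ∀ j, 1 ≤ j → 2 ≤ d j) {n m : ℕ}
    (hm1 : m ≠ n + 1) (hm2 : m ≠ n)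
    (hm3 : ∀ r, 1 ≤ r → r + 1 ≤ zeta d n → m ≠ n - Tt d r) :
    s d p n m = 0 := by
  rw [s, if_neg hm1, if_neg hm2, dif_neg]
  rintro ⟨r, h1, h2, h3⟩
  rw [show (∑ j ∈ Finset.Icc 1 r, (d j - 1) * q d (j - 1)) = Tt d r from rfl] at h3
  exact hm3 r h1 h2 (by omega)

/-- row sum of `S` against an arbitrary sequence. -/
lemma row_sum (hd0 : d 0 = 1) (hd : ∀ j, 1 ≤ j → 2 ≤ d j) (p : ℕ → ℝ)
    (v : ℕ → ℂ) (n : ℕ) :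
    ∑' m : ℕ, (s d p n m : ℂ) * v m
      = (∏ j ∈ Finset.Icc 1 (zeta d n), (p j : ℂ)) * v (n + 1)
        + (1 - (p 1 : ℂ)) * v n
        + ∑ r ∈ Finset.Icc 1 (zeta d n - 1),
            ((1 - (p (r + 1) : ℂ)) * ∏ j ∈ Finset.Icc 1 r, (p j : ℂ)) * v (n - Tt d r) := by
  classical
  set z := zeta d n with hz
  have hz1 : 1 ≤ z := zeta_pos hd0 hd n
  set F : Finset ℕ :=
    insert (n + 1) (insert n ((Finset.Icc 1 (z - 1)).image (fun r => n - Tt d r))) with hF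
  have hTle : ∀ r, r ≤ z - 1 → 1 ≤ r → Tt d r ≤ n ∧ 0 < Tt d r := by
    intro r hr hr1
    exact ⟨Tt_le hd0 hd (by omega), Tt_pos hd0 hd hr1⟩
  have hsum : ∑' m : ℕ, (s d p n m : ℂ) * v m = ∑ m ∈ F, (s d p n m : ℂ) * v m := by
    apply tsum_eq_sum
    intro m hm
    simp only [hF, Finset.mem_insert, Finset.mem_image, Finset.mem_Icc, not_or, not_exists] at hm
    have hzero : s d p n m = 0 := by
      apply s_eq_zero hd0 hd hm.1 hm.2.1
      intro r h1 h2 hcontra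
      exact hm.2.2 r ⟨⟨h1, by omega⟩, hcontra.symm⟩
    rw [hzero]; simp
  rw [hsum, hF]
  have hnot1 : (n + 1) ∉ insert n ((Finset.Icc 1 (z - 1)).image (fun r => n - Tt d r)) := by
    simp only [Finset.mem_insert, Finset.mem_image, Finset.mem_Icc]
    push_neg
    refine ⟨by omega, fun r hr => ?_⟩
    have := hTle r hr.2 hr.1
    omega
  have hnot2 : n ∉ (Finset.Icc 1 (z - 1)).image (fun r => n - Tt d r) := by
    simp only [Finset.mem_image, Finset.mem_Icc]
    push_neg
    intro r hr
    have := hTle r hr.2 hr.1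
    omega
  rw [Finset.sum_insert hnot1, Finset.sum_insert hnot2, Finset.sum_image ?inj]
  case inj =>
    intro r hr r' hr' hE
    rw [Finset.mem_coe, Finset.mem_Icc] at hr hr'
    have h1 := hTle r hr.2 hr.1
    have h2 := hTle r' hr'.2 hr'.1
    simp only at hE
    exact (Tt_strictMono hd0 hd).injective (show Tt d r = Tt d r' by omega)
  rw [s_apply_succ, s_apply_self]
  have hterm : ∑ r ∈ Finset.Icc 1 (z - 1), ((s d p n (n - Tt d r) : ℂ)) * v (n - Tt d r)
      = ∑ r ∈ Finset.Icc 1 (z - 1),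
          ((1 - (p (r + 1) : ℂ)) * ∏ j ∈ Finset.Icc 1 r, (p j : ℂ)) * v (n - Tt d r) := by
    refine Finset.sum_congr rfl fun r hr => ?_
    rw [Finset.mem_Icc] at hr
    rw [s_apply_sub hd0 hd hr.1 (by omega)]
    push_cast
    ring
  rw [hterm]
  push_cast
  ring

end Lemmas3
section Lemmas4

variable {d : ℕ → ℕ} {p : ℕ → ℝ}

lemma ftil_eq_pow {z : ℕ} (hz : 1 ≤ z) (lam : ℂ) :
    ftil d p z lam = iota d p lam z ^ d z := by
  obtain ⟨k, rfl⟩ : ∃ k, z = k + 1 := ⟨z - 1, by omega⟩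
  show f d p (k + 1) (ftil d p k lam) = _
  simp [f, iota]

lemma iota_mul (hp : ∀ j, 1 ≤ j → p j ∈ Set.Ioc (0 : ℝ) 1) (lam : ℂ) (z : ℕ) :
    (p (z + 1) : ℂ) * iota d p lam (z + 1) = ftil d p z lam - (1 - (p (z + 1) : ℂ)) := by
  have hpz : (p (z + 1) : ℂ) ≠ 0 := by
    exact_mod_cast ne_of_gt (hp (z + 1) (by omega)).1
  rw [iota]
  simp only [Nat.add_sub_cancel]
  field_simp

lemma iota_one (hp : ∀ j, 1 ≤ j → p j ∈ Set.Ioc (0 : ℝ) 1) (lam : ℂ) :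
    (p 1 : ℂ) * iota d p lam 1 = lam - (1 - (p 1 : ℂ)) := by
  have := iota_mul (d := d) hp lam 0
  simpa [ftil] using this

/-- The telescoping identity. -/
lemma telescope (hd : ∀ j, 1 ≤ j → 2 ≤ d j)
    (hp : ∀ j, 1 ≤ j → p j ∈ Set.Ioc (0 : ℝ) 1) (lam : ℂ) (z : ℕ) (hz : 1 ≤ z) :
    lam * ∏ j ∈ Finset.Icc 1 (z - 1), iota d p lam j ^ (d j - 1)
      = (1 - (p 1 : ℂ)) * ∏ j ∈ Finset.Icc 1 (z - 1), iota d p lam j ^ (d j - 1)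
        + (∏ j ∈ Finset.Icc 1 z, (p j : ℂ)) * iota d p lam z
        + ∑ r ∈ Finset.Icc 1 (z - 1), ((1 - (p (r + 1) : ℂ)) * ∏ j ∈ Finset.Icc 1 r, (p j : ℂ))
            * ∏ j ∈ Finset.Icc (r + 1) (z - 1), iota d p lam j ^ (d j - 1) := by
  induction z, hz using Nat.le_induction with
  | base =>
    have h1 := iota_one (d := d) hp lam
    simp only [show (1:ℕ) - 1 = 0 from rfl, Finset.Icc_eq_empty (by omega : ¬(1:ℕ) ≤ 0),
      Finset.prod_empty, Finset.sum_empty, Finset.Icc_self, Finset.prod_singleton,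
      mul_one, add_zero]
    linear_combination -h1
  | succ z hz ih =>
    have hz' : z - 1 + 1 = z := by omega
    simp only [Nat.add_sub_cancel]
    have hsplitP : ∀ (g : ℕ → ℂ), ∏ j ∈ Finset.Icc 1 z, g j
        = (∏ j ∈ Finset.Icc 1 (z - 1), g j) * g z := by
      intro g
      conv_lhs => rw [← hz']
      rw [Finset.prod_Icc_succ_top (by omega), hz']
    have hsplitS : ∀ (g : ℕ → ℂ), ∑ r ∈ Finset.Icc 1 z, g r
        = (∑ r ∈ Finset.Icc 1 (z - 1), g r) + g z := by
      intro g
      conv_lhs => rw [← hz']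
      rw [Finset.sum_Icc_succ_top (by omega), hz']
    set X := iota d p lam z ^ (d z - 1) with hX
    set A := ∏ j ∈ Finset.Icc 1 (z - 1), iota d p lam j ^ (d j - 1) with hA
    set Pi := ∏ j ∈ Finset.Icc 1 z, (p j : ℂ) with hPi
    rw [hsplitP (fun j => iota d p lam j ^ (d j - 1)),
        hsplitS (fun r => ((1 - (p (r + 1) : ℂ)) * ∏ j ∈ Finset.Icc 1 r, (p j : ℂ))
            * ∏ j ∈ Finset.Icc (r + 1) z, iota d p lam j ^ (d j - 1)),
        Finset.prod_Icc_succ_top (show 1 ≤ z + 1 by omega)]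
    rw [Finset.Icc_eq_empty (show ¬ z + 1 ≤ z by omega), Finset.prod_empty, mul_one]
    have hsum2 : ∑ r ∈ Finset.Icc 1 (z - 1),
        ((1 - (p (r + 1) : ℂ)) * ∏ j ∈ Finset.Icc 1 r, (p j : ℂ))
          * ∏ j ∈ Finset.Icc (r + 1) z, iota d p lam j ^ (d j - 1)
        = (∑ r ∈ Finset.Icc 1 (z - 1),
            ((1 - (p (r + 1) : ℂ)) * ∏ j ∈ Finset.Icc 1 r, (p j : ℂ))
              * ∏ j ∈ Finset.Icc (r + 1) (z - 1), iota d p lam j ^ (d j - 1)) * X := by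
      rw [Finset.sum_mul]
      refine Finset.sum_congr rfl fun r hr => ?_
      rw [Finset.mem_Icc] at hr
      have : ∏ j ∈ Finset.Icc (r + 1) z, iota d p lam j ^ (d j - 1)
          = (∏ j ∈ Finset.Icc (r + 1) (z - 1), iota d p lam j ^ (d j - 1)) * X := by
        conv_lhs => rw [← hz']
        rw [Finset.prod_Icc_succ_top (by omega), hz']
      rw [this]; ring
    rw [hsum2]
    have hchain : iota d p lam z * X = (p (z + 1) : ℂ) * iota d p lam (z + 1)
        + (1 - (p (z + 1) : ℂ)) := by
      have hdz := hd z hz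
      have h1 : iota d p lam z * X = iota d p lam z ^ d z := by
        rw [hX, ← pow_succ']
        congr 1
        omega
      rw [h1, ← ftil_eq_pow hz lam, iota_mul hp lam z]
      ring
    linear_combination X * ih + Pi * hchain

end Lemmas4
section Lemmas5

variable {d : ℕ → ℕ} {p : ℕ → ℝ}

lemma digit_eq_zero' {n r : ℕ} (hr : 1 ≤ r) (h : n < q d (r - 1)) : digit d n r = 0 := by
  rw [digit, Nat.div_eq_of_lt h, Nat.zero_mod]

lemma prod_Icc_eq_range (g : ℕ → ℂ) (N : ℕ) :
    ∏ j ∈ Finset.Icc 1 N, g j = ∏ r ∈ Finset.range N, g (r + 1) := by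
  induction N with
  | zero => simp
  | succ k ih => rw [Finset.prod_range_succ, ← ih, Finset.prod_Icc_succ_top (by omega)]

lemma vlam_eq_prod (hd0 : d 0 = 1) (hd : ∀ j, 1 ≤ j → 2 ≤ d j) (lam : ℂ) {n N : ℕ}
    (hN : n < q d N) :
    vlam d p lam n = ∏ j ∈ Finset.Icc 1 N, iota d p lam j ^ digit d n j := by
  rw [vlam, finprod_eq_prod_of_mulSupport_subset
    (fun r : ℕ => iota d p lam (r + 1) ^ digit d n (r + 1)) (s := Finset.range N) ?_]
  · exact (prod_Icc_eq_range (fun x => iota d p lam x ^ digit d n x) N).symm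
  intro r hr
  simp only [Function.mem_mulSupport] at hr
  simp only [Finset.coe_range, Set.mem_Iio]
  by_contra hcon
  push_neg at hcon
  have : n < q d r := lt_of_lt_of_le hN (q_le hd0 hd hcon)
  rw [digit_eq_zero this, pow_zero] at hr
  exact hr rfl

lemma vlam_zero (lam : ℂ) : vlam d p lam 0 = 1 := by
  have : ∀ r : ℕ, iota d p lam (r + 1) ^ digit d 0 (r + 1) = 1 := by
    intro r; simp [digit]
  rw [vlam]
  simp only [this]
  exact finprod_one

/-- `∏_{Icc 1 N} g = (∏_{Ioc 0 r} g) * (∏_{Ioc r (z-1)} g) * g z * ∏_{Ioc z N} g`. -/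
lemma prod_split4 (g : ℕ → ℂ) {r z N : ℕ} (hr : r ≤ z - 1) (hz : 1 ≤ z) (hzN : z ≤ N) :
    ∏ j ∈ Finset.Icc 1 N, g j
      = ((∏ j ∈ Finset.Ioc 0 r, g j) * ∏ j ∈ Finset.Ioc r (z - 1), g j)
        * g z * ∏ j ∈ Finset.Ioc z N, g j := by
  have h0 : Finset.Icc 1 N = Finset.Ioc 0 N := Finset.Icc_add_one_left_eq_Ioc 0 N
  have h1 : Finset.Ioc (z - 1) z = {z} := by ext x; simp [Finset.mem_Ioc]; omega
  rw [h0,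
    ← Finset.prod_Ioc_consecutive g (show (0:ℕ) ≤ r by omega) (show r ≤ N by omega),
    ← Finset.prod_Ioc_consecutive g (show r ≤ z - 1 by omega) (show z - 1 ≤ N by omega),
    ← Finset.prod_Ioc_consecutive g (show z - 1 ≤ z by omega) (show z ≤ N by omega),
    h1, Finset.prod_singleton]
  ring

lemma vlam_q (hd0 : d 0 = 1) (hd : ∀ j, 1 ≤ j → 2 ≤ d j)
    (hp : ∀ j, 1 ≤ j → p j ∈ Set.Ioc (0 : ℝ) 1) (lam : ℂ) {j : ℕ} (hj : 1 ≤ j) :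
    vlam d p lam (q d (j - 1)) = iota d p lam j := by
  have hj' : j - 1 + 1 = j := by omega
  have hlt : q d (j - 1) < q d j := by
    have h1 : q d (j - 1) * 2 ≤ q d j := by
      conv_rhs => rw [← hj', q_succ (j - 1), hj']
      exact Nat.mul_le_mul_left _ (hd j hj)
    have := q_pos hd0 hd (j - 1)
    omega
  rw [vlam_eq_prod hd0 hd lam hlt,
    prod_split4 _ (show j - 1 ≤ j - 1 by omega) hj (le_refl j)]
  have e1 : ∏ i ∈ Finset.Ioc 0 (j - 1), iota d p lam i ^ digit d (q d (j - 1)) i = 1 := by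
    refine Finset.prod_eq_one fun x hx => ?_
    rw [Finset.mem_Ioc] at hx
    have : digit d (q d (j - 1)) x = 0 := by
      have := digit_mul_eq_zero hd0 hd (show 1 ≤ x by omega) hx.2 1
      rwa [Nat.mul_one] at this
    rw [this, pow_zero]
  have e2 : digit d (q d (j - 1)) j = 1 := by
    rw [digit, Nat.div_self (q_pos hd0 hd (j - 1)), Nat.mod_eq_of_lt (by have := hd j hj; omega)]
  have e3 : Finset.Ioc j j = (∅ : Finset ℕ) := by simp
  have e0 : Finset.Ioc (j - 1) (j - 1) = (∅ : Finset ℕ) := by simp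
  rw [e0, Finset.prod_empty, e1, e2, e3, Finset.prod_empty, pow_one]
  ring

lemma vlam_norm_le_one (hd0 : d 0 = 1) (hd : ∀ j, 1 ≤ j → 2 ≤ d j) (lam : ℂ)
    (hle : ∀ j, 1 ≤ j → ‖iota d p lam j‖ ≤ 1) (n : ℕ) : ‖vlam d p lam n‖ ≤ 1 := by
  have hN : n < q d n := by have := q_ge hd0 hd n; omega
  rw [vlam_eq_prod hd0 hd lam hN]
  rw [norm_prod]
  refine Finset.prod_le_one (fun j hj => norm_nonneg _) fun j hj => ?_
  rw [Finset.mem_Icc] at hj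
  rw [norm_pow]
  exact pow_le_one₀ (norm_nonneg _) (hle j hj.1)

/-- `vlam` is an eigenvector of the row action, for every `lam`. -/
lemma eigen_vlam (hd0 : d 0 = 1) (hd : ∀ j, 1 ≤ j → 2 ≤ d j)
    (hp : ∀ j, 1 ≤ j → p j ∈ Set.Ioc (0 : ℝ) 1) (lam : ℂ) (n : ℕ) :
    ∑' m : ℕ, (s d p n m : ℂ) * vlam d p lam m = lam * vlam d p lam n := by
  set z := zeta d n with hzdef
  have hz1 : 1 ≤ z := zeta_pos hd0 hd n
  set N := n + 1 with hNdef
  have hqN : n + 1 < q d N := by have := q_ge hd0 hd N; omega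
  have hzN : z ≤ N := by
    by_contra hcon
    push_neg at hcon
    have h1 : Tt d (z - 1) ≤ n := Tt_le hd0 hd (by omega)
    have h2 : Tt d (z - 1) + 1 = q d (z - 1) := Tt_add_one hd0 hd (z - 1)
    have h3 : q d N ≤ q d (z - 1) := q_le hd0 hd (by omega)
    omega
  set ι : ℕ → ℂ := iota d p lam with hι
  set a := digit d n z with ha
  set A := ∏ j ∈ Finset.Ioc 0 (z - 1), ι j ^ (d j - 1) with hA
  set W := ∏ j ∈ Finset.Ioc z N, ι j ^ digit d n j with hW
  -- value at n
  have hvn : vlam d p lam n = A * (ι z ^ a) * W := by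
    rw [vlam_eq_prod hd0 hd lam (show n < q d N by omega),
      prod_split4 _ (le_refl (z - 1)) hz1 hzN]
    have e0 : Finset.Ioc (z-1) (z-1) = (∅ : Finset ℕ) := by simp
    have e5 : ∏ j ∈ Finset.Ioc 0 (z - 1), ι j ^ digit d n j = A := by
      rw [hA]
      exact Finset.prod_congr rfl fun x hx => by
        rw [Finset.mem_Ioc] at hx
        rw [digit_of_lt_zeta (by omega) (by omega)]
    rw [e0, Finset.prod_empty, mul_one, e5, hW, ha]
  -- value at n + 1
  have hvs : vlam d p lam (n + 1) = (ι z ^ (a + 1)) * W := by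
    rw [vlam_eq_prod hd0 hd lam (show n + 1 < q d N by omega),
      prod_split4 _ (le_refl (z - 1)) hz1 hzN]
    have e0 : Finset.Ioc (z-1) (z-1) = (∅ : Finset ℕ) := by simp
    have e1 : ∏ j ∈ Finset.Ioc 0 (z - 1), ι j ^ digit d (n + 1) j = 1 :=
      Finset.prod_eq_one fun x hx => by
        rw [Finset.mem_Ioc] at hx
        rw [digit_succ_lt hd0 hd (by omega) (by omega), pow_zero]
    have e2 : digit d (n + 1) z = a + 1 := digit_succ_at hd0 hd n
    have e3 : ∏ j ∈ Finset.Ioc z N, ι j ^ digit d (n + 1) j = W :=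
      Finset.prod_congr rfl fun x hx => by
        rw [Finset.mem_Ioc] at hx
        rw [digit_succ_gt hd0 hd (by omega)]
    rw [e0, Finset.prod_empty, mul_one, e1, e2, e3, one_mul]
  -- value at n - Tt r
  have hvr : ∀ r, 1 ≤ r → r ≤ z - 1 →
      vlam d p lam (n - Tt d r)
        = (∏ j ∈ Finset.Ioc r (z - 1), ι j ^ (d j - 1)) * (ι z ^ a) * W := by
    intro r h1 h2
    have hrz : r < zeta d n := by omega
    have hTn : Tt d r ≤ n := Tt_le hd0 hd hrz
    rw [vlam_eq_prod hd0 hd lam (show n - Tt d r < q d N by omega),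
      prod_split4 _ (show r ≤ z - 1 from h2) hz1 hzN]
    have e1 : ∏ j ∈ Finset.Ioc 0 r, ι j ^ digit d (n - Tt d r) j = 1 :=
      Finset.prod_eq_one fun x hx => by
        rw [Finset.mem_Ioc] at hx
        rw [digit_sub_le hd0 hd hrz (by omega) hx.2, pow_zero]
    have e2 : ∏ j ∈ Finset.Ioc r (z - 1), ι j ^ digit d (n - Tt d r) j
        = ∏ j ∈ Finset.Ioc r (z - 1), ι j ^ (d j - 1) :=
      Finset.prod_congr rfl fun x hx => by
        rw [Finset.mem_Ioc] at hx
        rw [digit_sub_gt hd0 hd hrz (by omega), digit_of_lt_zeta (by omega) (by omega)]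
    have e3 : digit d (n - Tt d r) z = a := by
      rw [digit_sub_gt hd0 hd hrz (by omega)]
    have e4 : ∏ j ∈ Finset.Ioc z N, ι j ^ digit d (n - Tt d r) j = W :=
      Finset.prod_congr rfl fun x hx => by
        rw [Finset.mem_Ioc] at hx
        rw [digit_sub_gt hd0 hd hrz (by omega)]
    rw [e1, e2, e3, e4, one_mul]
  -- assemble
  rw [row_sum hd0 hd p _ n, ← hzdef, hvs, hvn]
  have hsum : ∑ r ∈ Finset.Icc 1 (z - 1),
      ((1 - (p (r + 1) : ℂ)) * ∏ j ∈ Finset.Icc 1 r, (p j : ℂ)) * vlam d p lam (n - Tt d r)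
      = (∑ r ∈ Finset.Icc 1 (z - 1),
          ((1 - (p (r + 1) : ℂ)) * ∏ j ∈ Finset.Icc 1 r, (p j : ℂ))
            * ∏ j ∈ Finset.Icc (r + 1) (z - 1), ι j ^ (d j - 1)) * ((ι z ^ a) * W) := by
    rw [Finset.sum_mul]
    refine Finset.sum_congr rfl fun r hr => ?_
    rw [Finset.mem_Icc] at hr
    rw [hvr r hr.1 hr.2]
    have : Finset.Icc (r + 1) (z - 1) = Finset.Ioc r (z - 1) := Finset.Icc_add_one_left_eq_Ioc r (z - 1)
    rw [this]
    ring
  rw [hsum]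
  have htele := telescope hd hp lam z hz1
  have hAeq : ∏ j ∈ Finset.Icc 1 (z - 1), iota d p lam j ^ (d j - 1) = A := by
    rw [hA, ← hι, (show Finset.Icc 1 (z - 1) = Finset.Ioc 0 (z - 1) from Finset.Icc_add_one_left_eq_Ioc 0 (z - 1))]
  rw [hAeq] at htele
  rw [pow_succ]
  linear_combination (-((ι z ^ a) * W)) * htele
end Lemmas5
section Lemmas6

variable {d : ℕ → ℕ} {p : ℕ → ℝ}

lemma iota_escape (hd : ∀ j, 1 ≤ j → 2 ≤ d j)
    (hp : ∀ j, 1 ≤ j → p j ∈ Set.Ioc (0 : ℝ) 1) (lam : ℂ) {j0 : ℕ} (hj0 : 1 ≤ j0)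
    (hc : 1 < ‖iota d p lam j0‖) (k : ℕ) :
    1 + (‖iota d p lam j0‖ - 1) * ‖iota d p lam j0‖ ^ k ≤ ‖iota d p lam (j0 + k)‖ := by
  set c := ‖iota d p lam j0‖ with hcdef
  induction k with
  | zero =>
    simp only [pow_zero, mul_one, Nat.add_zero, ← hcdef]
    linarith
  | succ k ih =>
    have hck : (1:ℝ) ≤ c ^ k := one_le_pow₀ (by linarith)
    set J := j0 + k with hJdef
    set x := ‖iota d p lam J‖ with hxdef
    have hxc : c ≤ x := by nlinarith
    have hx1 : (1:ℝ) < x := by linarith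
    have hJ1 : 1 ≤ J := by omega
    have hdJ : 2 ≤ d J := hd J hJ1
    have hpJ := hp (J + 1) (by omega)
    set y := ‖iota d p lam (J + 1)‖ with hydef
    have hkey : x ^ d J - (1 - p (J + 1)) ≤ p (J + 1) * y := by
      have h1 := iota_mul (d := d) hp lam J
      rw [ftil_eq_pow hJ1 lam] at h1
      have h2 : ‖(p (J + 1) : ℂ) * iota d p lam (J + 1)‖ = p (J + 1) * y := by
        rw [norm_mul, Complex.norm_real, Real.norm_eq_abs, abs_of_pos hpJ.1, hydef]
      have h3 := norm_sub_norm_le (iota d p lam J ^ d J) (1 - (p (J + 1) : ℂ))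
      rw [norm_pow, ← hxdef] at h3
      have h5 : ‖(1 - (p (J + 1) : ℂ))‖ = 1 - p (J + 1) := by
        have he : (1 - (p (J + 1) : ℂ)) = (((1 - p (J + 1) : ℝ)) : ℂ) := by push_cast; ring
        rw [he, Complex.norm_real, Real.norm_eq_abs, abs_of_nonneg (by linarith [hpJ.2])]
      rw [h5, ← h1, h2] at h3
      exact h3
    have hpow : x ^ 2 ≤ x ^ d J := pow_le_pow_right₀ (le_of_lt hx1) hdJ
    have h5 : x ^ 2 - 1 ≤ p (J + 1) * (y - 1) := by nlinarith
    have h6 : x ^ 2 - 1 ≤ y - 1 := by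
      have h7 : x ^ 2 - 1 ≤ (x ^ 2 - 1) / p (J + 1) :=
        le_div_self (by nlinarith) hpJ.1 hpJ.2
      have h8 : (x ^ 2 - 1) / p (J + 1) ≤ y - 1 := by
        rw [div_le_iff₀ hpJ.1]
        nlinarith
      linarith
    have hgoal : j0 + (k + 1) = J + 1 := by omega
    rw [hgoal, ← hydef]
    have hps : c ^ (k + 1) = c ^ k * c := pow_succ c k
    nlinarith [ih, hxc, hx1, hck, hc, h6]

lemma iota_unbounded (hd : ∀ j, 1 ≤ j → 2 ≤ d j)
    (hp : ∀ j, 1 ≤ j → p j ∈ Set.Ioc (0 : ℝ) 1) (lam : ℂ)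
    (hex : ∃ j0, 1 ≤ j0 ∧ 1 < ‖iota d p lam j0‖) (C : ℝ) (K : ℕ) :
    ∃ j, K ≤ j ∧ 1 ≤ j ∧ C < ‖iota d p lam j‖ := by
  obtain ⟨j0, hj0, hc⟩ := hex
  set c := ‖iota d p lam j0‖ with hcdef
  obtain ⟨k0, hk0⟩ := pow_unbounded_of_one_lt (max C 0 / (c - 1)) hc
  set k := max k0 K with hk
  have hck : c ^ k0 ≤ c ^ k := pow_le_pow_right₀ (le_of_lt hc) (le_max_left _ _)
  refine ⟨j0 + k, by omega, by omega, ?_⟩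
  have hesc := iota_escape hd hp lam hj0 hc k
  have h2 : max C 0 < (c - 1) * c ^ k := by
    rw [div_lt_iff₀ (by linarith)] at hk0
    nlinarith
  calc C ≤ max C 0 := le_max_left _ _
  _ < (c - 1) * c ^ k := h2
  _ < 1 + (c - 1) * c ^ k := by linarith
  _ ≤ _ := hesc

lemma mem_E_iff (hd : ∀ j, 1 ≤ j → 2 ≤ d j)
    (hp : ∀ j, 1 ≤ j → p j ∈ Set.Ioc (0 : ℝ) 1) (lam : ℂ) :
    lam ∈ E d p ↔ ∀ j, 1 ≤ j → ‖iota d p lam j‖ ≤ 1 := by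
  constructor
  · intro hE
    by_contra hcon
    push_neg at hcon
    obtain ⟨j0, hj0, hgt⟩ := hcon
    rw [E, Set.mem_setOf_eq] at hE
    set L := limsup (fun j => (‖ftil d p j lam‖₊ : ℝ≥0∞)) atTop with hL
    have hLtop : L ≠ ⊤ := hE.ne
    have hL1 : L < L + 1 := ENNReal.lt_add_right hLtop one_ne_zero
    have hev := Filter.eventually_lt_of_limsup_lt hL1
    rw [Filter.eventually_atTop] at hev
    obtain ⟨J, hJ⟩ := hev
    set M := (L + 1).toReal with hM
    obtain ⟨j, hjK, hj1, hjgt⟩ := iota_unbounded hd hp lam ⟨j0, hj0, hgt⟩ (max M 1) J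
    have h1 : ‖ftil d p j lam‖ ≤ M := by
      have h2 := hJ j hjK
      have h3 : L + 1 ≠ ⊤ := by
        simp [ENNReal.add_ne_top, hLtop]
      have h4 := ENNReal.toReal_mono h3 h2.le
      rwa [ENNReal.coe_toReal, coe_nnnorm] at h4
    have h4 : ‖ftil d p j lam‖ = ‖iota d p lam j‖ ^ d j := by
      rw [ftil_eq_pow hj1, norm_pow]
    have h5 : ‖iota d p lam j‖ ≤ ‖iota d p lam j‖ ^ d j :=
      le_self_pow₀ (by have := le_max_right M 1; linarith) (by have := hd j hj1; omega)
    have h6 := le_max_left M 1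
    linarith
  · intro hle
    rw [E, Set.mem_setOf_eq]
    have hev : ∀ᶠ j in (atTop : Filter ℕ), (‖ftil d p j lam‖₊ : ℝ≥0∞) ≤ 1 := by
      rw [Filter.eventually_atTop]
      refine ⟨1, fun j hj => ?_⟩
      have h1 : ‖ftil d p j lam‖ ≤ 1 := by
        rw [ftil_eq_pow hj, norm_pow]
        exact pow_le_one₀ (norm_nonneg _) (hle j hj)
      have h2 : ‖ftil d p j lam‖₊ ≤ 1 := by
        rw [← NNReal.coe_le_coe, coe_nnnorm]
        exact_mod_cast h1
      exact_mod_cast h2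
    calc limsup (fun j => (‖ftil d p j lam‖₊ : ℝ≥0∞)) atTop ≤ 1 :=
        Filter.limsup_le_of_le (by isBoundedDefault) hev
    _ < ⊤ := ENNReal.one_lt_top

lemma eigen_zero (hd0 : d 0 = 1) (hd : ∀ j, 1 ≤ j → 2 ≤ d j)
    (hp : ∀ j, 1 ≤ j → p j ∈ Set.Ioc (0 : ℝ) 1) (lam : ℂ) (v : ℕ → ℂ)
    (hv : ∀ n, ∑' m : ℕ, (s d p n m : ℂ) * v m = lam * v n) (h0 : v 0 = 0) :
    ∀ n, v n = 0 := by
  have H : ∀ N, ∀ n ≤ N, v n = 0 := by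
    intro N
    induction N with
    | zero => intro n hn; interval_cases n; exact h0
    | succ N ihN =>
      intro n hn
      rcases Nat.lt_or_ge n (N + 1) with h' | h'
      · exact ihN n (by omega)
      · have hn1 : n = N + 1 := by omega
        subst hn1
        have hr := hv N
        rw [row_sum hd0 hd p v N] at hr
        have hvn : v N = 0 := ihN N le_rfl
        have hsum0 : ∑ r ∈ Finset.Icc 1 (zeta d N - 1),
            ((1 - (p (r + 1) : ℂ)) * ∏ j ∈ Finset.Icc 1 r, (p j : ℂ)) * v (N - Tt d r) = 0 :=
          Finset.sum_eq_zero fun r hr' => by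
            rw [ihN (N - Tt d r) (by omega), mul_zero]
        rw [hvn, hsum0, mul_zero, add_zero, add_zero, mul_zero] at hr
        have hP : (∏ j ∈ Finset.Icc 1 (zeta d N), (p j : ℂ)) ≠ 0 :=
          Finset.prod_ne_zero_iff.mpr fun j hj => by
            rw [Finset.mem_Icc] at hj
            exact_mod_cast ne_of_gt (hp j hj.1).1
        rcases mul_eq_zero.mp hr with h | h
        · exact absurd h hP
        · exact h
  exact fun n => H n n le_rfl

end Lemmas6
/-- the point spectrum of `S` on `l^∞` equals `E`: there is a nonzero
bounded eigenvector for `λ` iff `λ ∈ E`. -/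
theorem stmt4 (d : ℕ → ℕ) (p : ℕ → ℝ)
    (hd0 : d 0 = 1) (hd : ∀ j, 1 ≤ j → 2 ≤ d j)
    (hp : ∀ j, 1 ≤ j → p j ∈ Set.Ioc (0 : ℝ) 1) (lam : ℂ) :
    (∃ v : ℕ → ℂ, (∃ C : ℝ, ∀ n, ‖v n‖ ≤ C) ∧ v ≠ 0 ∧
        ∀ n, ∑' m : ℕ, (s d p n m : ℂ) * v m = lam * v n) ↔ lam ∈ E d p := by
  constructor
  · rintro ⟨v, ⟨C, hC⟩, hvne, hveq⟩
    set u : ℕ → ℂ := fun n => v n - v 0 * vlam d p lam n with hu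
    have hueq : ∀ n, ∑' m : ℕ, (s d p n m : ℂ) * u m = lam * u n := by
      intro n
      have h1 := hveq n
      rw [row_sum hd0 hd p v n] at h1
      have h2 := eigen_vlam hd0 hd hp lam n
      rw [row_sum hd0 hd p (vlam d p lam) n] at h2
      rw [row_sum hd0 hd p u n]
      have hsplit : ∑ r ∈ Finset.Icc 1 (zeta d n - 1),
          ((1 - (p (r + 1) : ℂ)) * ∏ j ∈ Finset.Icc 1 r, (p j : ℂ)) * u (n - Tt d r)
          = (∑ r ∈ Finset.Icc 1 (zeta d n - 1),
              ((1 - (p (r + 1) : ℂ)) * ∏ j ∈ Finset.Icc 1 r, (p j : ℂ)) * v (n - Tt d r))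
            - v 0 * ∑ r ∈ Finset.Icc 1 (zeta d n - 1),
              ((1 - (p (r + 1) : ℂ)) * ∏ j ∈ Finset.Icc 1 r, (p j : ℂ))
                * vlam d p lam (n - Tt d r) := by
        rw [Finset.mul_sum, ← Finset.sum_sub_distrib]
        exact Finset.sum_congr rfl fun r _ => by simp only [hu]; ring
      rw [hsplit]
      simp only [hu]
      linear_combination h1 - v 0 * h2
    have h0 : u 0 = 0 := by simp [hu, vlam_zero]
    have huz := eigen_zero hd0 hd hp lam u hueq h0
    have hvv : ∀ n, v n = v 0 * vlam d p lam n := by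
      intro n
      have hn := huz n
      simp only [hu] at hn
      linear_combination hn
    have hv0 : v 0 ≠ 0 := by
      intro h
      apply hvne
      funext n
      simp only [hvv n, h, zero_mul, Pi.zero_apply]
    have hb : ∀ j, 1 ≤ j → ‖iota d p lam j‖ ≤ C / ‖v 0‖ := by
      intro j hj
      have h1 := hC (q d (j - 1))
      rw [hvv (q d (j - 1)), vlam_q hd0 hd hp lam hj, norm_mul, mul_comm] at h1
      have h2 : 0 < ‖v 0‖ := norm_pos_iff.mpr hv0
      exact (le_div_iff₀ h2).mpr h1
    have hle1 : ∀ j, 1 ≤ j → ‖iota d p lam j‖ ≤ 1 := by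
      by_contra hcon
      push_neg at hcon
      obtain ⟨j0, hj0, hgt⟩ := hcon
      obtain ⟨j, _, hj1, hjgt⟩ := iota_unbounded hd hp lam ⟨j0, hj0, hgt⟩ (C / ‖v 0‖) 0
      exact absurd (hb j hj1) (not_le.mpr hjgt)
    exact (mem_E_iff hd hp lam).mpr hle1
  · intro hE
    refine ⟨vlam d p lam,
      ⟨1, vlam_norm_le_one hd0 hd lam ((mem_E_iff hd hp lam).mp hE)⟩, ?_,
      eigen_vlam hd0 hd hp lam⟩
    intro h
    have hcf := congrFun h 0
    rw [vlam_zero] at hcf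
    simp at hcf

end AMFC
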